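/- arXiv:1912.07835 — 4 statements merged into one kernel-verified Lean document; each statement's English description precedes it below -/
import Mathlib

section
/- Suppose 0 < q < 1, ε > 0, h ≥ 0, Δt > 0. If u, v ∈ (q,1) and u' is defined by u' = (u + uΔt/ε + hqvΔt/(u+q))/(1 + uΔt/ε + hvΔt/(u+q)), then u' - q = ((u - q) + (1-q)uΔt/ε)/(1 + uΔt/ε + hvΔt/(u+q)), and hence u' > q. -/
theorem stmt_1 (ε h q Δt u v u' : ℝ)
    (hε : 0 < ε) (hh : 0 ≤ h) (hq0 : 0 < q) (hq1 : q < 1) (hΔt : 0 < Δt)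
    (hu : u ∈ Set.Ioo q 1) (hv : v ∈ Set.Ioo q 1)
    (hu' : u' = (u + u * Δt / ε + h * q * v * Δt / (u + q)) /
        (1 + u * Δt / ε + h * v * Δt / (u + q))) :
    u' - q = ((u - q) + (1 - q) * u * Δt / ε) /
        (1 + u * Δt / ε + h * v * Δt / (u + q)) ∧ q < u' := by
  obtain ⟨hu1, hu2⟩ := hu
  obtain ⟨hv1, hv2⟩ := hv
  have huq : 0 < u + q := by linarith
  have hupos : 0 < u := lt_trans hq0 hu1
  have hD : 0 < 1 + u * Δt / ε + h * v * Δt / (u + q) := by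
    have h1 : 0 < u * Δt / ε := by positivity
    have h2 : 0 ≤ h * v * Δt / (u + q) := by
      apply div_nonneg _ huq.le
      have : 0 < v := lt_trans hq0 hv1
      positivity
    linarith
  have key : u' - q = ((u - q) + (1 - q) * u * Δt / ε) /
      (1 + u * Δt / ε + h * v * Δt / (u + q)) := by
    rw [hu', div_sub' hD.ne']
    congr 1
    field_simp
    ring
  refine ⟨key, ?_⟩
  have hnum : 0 < (u - q) + (1 - q) * u * Δt / ε := by
    have h1q : 0 < 1 - q := by linarith
    have : 0 < (1 - q) * u * Δt / ε := by positivity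
    linarith
  have := div_pos hnum hD
  linarith [key ▸ this]
end

section
/- The open square (q,1)² is invariant under the map (u,v) ↦ (u', v') where u' = (u + uΔt/ε + hqvΔt/(u+q))/(1 + uΔt/ε + hvΔt/(u+q)) and v' = (v + uΔt)/(1+Δt), for any ε > 0, h ≥ 0, 0 < q < 1, Δt > 0. That is, if (u,v) ∈ (q,1)² then (u',v') ∈ (q,1)². -/
theorem stmt_4 (ε h q Δt : ℝ)
    (hε : 0 < ε) (hh : 0 ≤ h) (hq0 : 0 < q) (hq1 : q < 1) (hΔt : 0 < Δt)
    (u v : ℝ) (hu : u ∈ Set.Ioo q 1) (hv : v ∈ Set.Ioo q 1) :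
    (u + u * Δt / ε + h * q * v * Δt / (u + q)) /
        (1 + u * Δt / ε + h * v * Δt / (u + q)) ∈ Set.Ioo q 1 ∧
    (v + u * Δt) / (1 + Δt) ∈ Set.Ioo q 1 := by
  obtain ⟨hu1, hu2⟩ := hu
  obtain ⟨hv1, hv2⟩ := hv
  have hu0 : 0 < u := lt_trans hq0 hu1
  have hv0 : 0 < v := lt_trans hq0 hv1
  have huq : 0 < u + q := by linarith
  set A := u * Δt / ε with hAdef
  set B := h * v * Δt / (u + q) with hBdef
  have hA : 0 < A := by positivity
  have hB : 0 ≤ B := by positivity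
  have hnum : h * q * v * Δt / (u + q) = q * B := by rw [hBdef]; ring
  have hD : 0 < 1 + A + B := by linarith
  constructor
  · rw [hnum, Set.mem_Ioo, lt_div_iff₀ hD, div_lt_one hD]
    constructor <;> nlinarith
  · rw [Set.mem_Ioo, lt_div_iff₀ (by linarith : (0:ℝ) < 1 + Δt),
      div_lt_one (by linarith : (0:ℝ) < 1 + Δt)]
    constructor <;> nlinarith
end

section
/- Let 0 < q < 1, ε > 0, h ≥ 0, d ≥ 0, Δt > 0, Δx > 0 with Δt/Δx² ≤ 1/max{2, 2d}. Consider functions u^k, v^k : {0,…,J} → ℝ obtained by alternately applying the reaction step (u,v) ↦ ((u + uΔt/ε + hqvΔt/(u+q))/(1 + uΔt/ε + hvΔt/(u+q)), (v + uΔt)/(1+Δt)) pointwise and the FTCS diffusion steps ũ_j = u_j + (Δt/Δx²)(u_{j+1}-2u_j+u_{j-1}), ṽ_j = v_j + (dΔt/Δx²)(v_{j+1}-2v_j+v_{j-1}) with periodic boundary conditions. If u_j^0, v_j^0 ∈ (q,1) for all j, then u_j^k, v_j^k ∈ (q,1) for all j and all k ∈ ℕ. -/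
private lemma conv_lb {a x y z c : ℝ} (ha : 0 ≤ a) (ha2 : 2 * a ≤ 1)
    (hx : c < x) (hy : c < y) (hz : c < z) :
    c < x + a * (y - 2 * x + z) := by
  rcases eq_or_lt_of_le ha with h | h
  · rw [← h]; linarith
  · nlinarith [mul_pos h (sub_pos.mpr hy), mul_pos h (sub_pos.mpr hz),
      mul_nonneg (by linarith : (0:ℝ) ≤ 1 - 2 * a) (sub_pos.mpr hx).le]

private lemma conv_ub {a x y z c : ℝ} (ha : 0 ≤ a) (ha2 : 2 * a ≤ 1)
    (hx : x < c) (hy : y < c) (hz : z < c) :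
    x + a * (y - 2 * x + z) < c := by
  rcases eq_or_lt_of_le ha with h | h
  · rw [← h]; linarith
  · nlinarith [mul_pos h (sub_pos.mpr hy), mul_pos h (sub_pos.mpr hz),
      mul_nonneg (by linarith : (0:ℝ) ≤ 1 - 2 * a) (sub_pos.mpr hx).le]

private lemma react_u {ε h q Δt U V : ℝ} (hε : 0 < ε) (hh : 0 ≤ h) (hq0 : 0 < q)
    (hq1 : q < 1) (hΔt : 0 < Δt) (hU : U ∈ Set.Ioo q 1) (hV : V ∈ Set.Ioo q 1) :
    (U + U * Δt / ε + h * q * V * Δt / (U + q)) /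
      (1 + U * Δt / ε + h * V * Δt / (U + q)) ∈ Set.Ioo q 1 := by
  obtain ⟨hU1, hU2⟩ := hU
  obtain ⟨hV1, hV2⟩ := hV
  have hs : 0 < U + q := by linarith
  have hU0 : 0 < U := lt_trans hq0 hU1
  have hV0 : 0 < V := lt_trans hq0 hV1
  have ha : 0 < U * Δt / ε := div_pos (mul_pos hU0 hΔt) hε
  have hb : 0 ≤ h * V * Δt / (U + q) :=
    div_nonneg (mul_nonneg (mul_nonneg hh hV0.le) hΔt.le) hs.le
  have hN : h * q * V * Δt / (U + q) = q * (h * V * Δt / (U + q)) := by ring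
  set a := U * Δt / ε
  set b := h * V * Δt / (U + q)
  have hD : 0 < 1 + a + b := by linarith
  rw [hN]
  constructor
  · rw [lt_div_iff₀ hD]; nlinarith
  · rw [div_lt_one hD]; nlinarith

private lemma react_v {q Δt U V : ℝ} (hq0 : 0 < q) (hq1 : q < 1) (hΔt : 0 < Δt)
    (hU : U ∈ Set.Ioo q 1) (hV : V ∈ Set.Ioo q 1) :
    (V + U * Δt) / (1 + Δt) ∈ Set.Ioo q 1 := by
  obtain ⟨hU1, hU2⟩ := hU
  obtain ⟨hV1, hV2⟩ := hV
  have hD : 0 < 1 + Δt := by linarith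
  constructor
  · rw [lt_div_iff₀ hD]; nlinarith
  · rw [div_lt_one hD]; nlinarith

theorem stmt_7 (ε h q d Δt Δx : ℝ)
    (hε : 0 < ε) (hh : 0 ≤ h) (hq0 : 0 < q) (hq1 : q < 1) (hd : 0 ≤ d)
    (hΔt : 0 < Δt) (hΔx : 0 < Δx)
    (hstab : Δt / Δx ^ 2 ≤ 1 / max 2 (2 * d))
    (J : ℕ) [NeZero J]
    (u v ru rv : ℕ → ZMod J → ℝ)
    (hru : ∀ k j, ru k j = (u k j + u k j * Δt / ε + h * q * v k j * Δt / (u k j + q)) /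
        (1 + u k j * Δt / ε + h * v k j * Δt / (u k j + q)))
    (hrv : ∀ k j, rv k j = (v k j + u k j * Δt) / (1 + Δt))
    (hu : ∀ k j, u (k + 1) j =
        ru k j + Δt / Δx ^ 2 * (ru k (j + 1) - 2 * ru k j + ru k (j - 1)))
    (hv : ∀ k j, v (k + 1) j =
        rv k j + d * Δt / Δx ^ 2 * (rv k (j + 1) - 2 * rv k j + rv k (j - 1)))
    (h0 : ∀ j, u 0 j ∈ Set.Ioo q 1 ∧ v 0 j ∈ Set.Ioo q 1) :
    ∀ k j, u k j ∈ Set.Ioo q 1 ∧ v k j ∈ Set.Ioo q 1 := by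
  have hLpos : 0 < Δt / Δx ^ 2 := by positivity
  have hL2 : 2 * (Δt / Δx ^ 2) ≤ 1 := by
    have h1 : (1 : ℝ) / max 2 (2 * d) ≤ 1 / 2 :=
      one_div_le_one_div_of_le (by norm_num) (le_max_left _ _)
    linarith [hstab.trans h1]
  have hμ0 : 0 ≤ d * Δt / Δx ^ 2 := by positivity
  have hμ2 : 2 * (d * Δt / Δx ^ 2) ≤ 1 := by
    rcases eq_or_lt_of_le hd with h' | h'
    · rw [← h']; simp
    · have h2d : 0 < 2 * d := by linarith
      have h1 : (1 : ℝ) / max 2 (2 * d) ≤ 1 / (2 * d) :=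
        one_div_le_one_div_of_le h2d (le_max_right _ _)
      have := hstab.trans h1
      have : 2 * d * (Δt / Δx ^ 2) ≤ 2 * d * (1 / (2 * d)) :=
        mul_le_mul_of_nonneg_left this (by linarith)
      rw [mul_one_div, div_self (ne_of_gt h2d)] at this
      calc 2 * (d * Δt / Δx ^ 2) = 2 * d * (Δt / Δx ^ 2) := by ring
        _ ≤ 1 := this
  intro k
  induction k with
  | zero => exact h0
  | succ k ih =>
    have hruB : ∀ j, ru k j ∈ Set.Ioo q 1 := fun j => by
      rw [hru k j]; exact react_u hε hh hq0 hq1 hΔt (ih j).1 (ih j).2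
    have hrvB : ∀ j, rv k j ∈ Set.Ioo q 1 := fun j => by
      rw [hrv k j]; exact react_v hq0 hq1 hΔt (ih j).1 (ih j).2
    intro j
    constructor
    · rw [hu k j]
      exact ⟨conv_lb hLpos.le hL2 (hruB j).1 (hruB (j+1)).1 (hruB (j-1)).1,
        conv_ub hLpos.le hL2 (hruB j).2 (hruB (j+1)).2 (hruB (j-1)).2⟩
    · rw [hv k j]
      exact ⟨conv_lb hμ0 hμ2 (hrvB j).1 (hrvB (j+1)).1 (hrvB (j-1)).1,
        conv_ub hμ0 hμ2 (hrvB j).2 (hrvB (j+1)).2 (hrvB (j-1)).2⟩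
end

section
/- Let f ≥ 0 and g ≥ 0 be real-valued functions on ℝ, d ≥ 0, Δt, Δx > 0 with dΔt/Δx² ≤ 1/2. Define the scheme u_j^{k+1} = (u_j^k + dΔt/Δx² (u_{j+1}^k - 2u_j^k + u_{j-1}^k) + g(u_j^k)Δt)/(1 + f(u_j^k)Δt) (i.e. the combined explicit-diffusion/implicit-reaction update solved for u_j^{k+1}). If u_j^0 ≥ 0 for all j (periodic indexing), then u_j^k ≥ 0 for all j and all k. -/
theorem stmt_11 (f g : ℝ → ℝ) (hf : ∀ x, 0 ≤ f x) (hg : ∀ x, 0 ≤ g x)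
    (d Δt Δx : ℝ) (hd : 0 ≤ d) (hΔt : 0 < Δt) (hΔx : 0 < Δx)
    (hstab : d * Δt / Δx ^ 2 ≤ 1 / 2)
    (J : ℕ) [NeZero J] (u : ℕ → ZMod J → ℝ)
    (hstep : ∀ k j, u (k + 1) j =
      (u k j + d * Δt / Δx ^ 2 * (u k (j + 1) - 2 * u k j + u k (j - 1))
        + g (u k j) * Δt) / (1 + f (u k j) * Δt))
    (h0 : ∀ j, 0 ≤ u 0 j) :
    ∀ k j, 0 ≤ u k j := by
  have hlam : 0 ≤ d * Δt / Δx ^ 2 := by positivity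
  intro k
  induction k with
  | zero => exact h0
  | succ k ih =>
    intro j
    rw [hstep k j]
    apply div_nonneg
    · have h1 := ih j
      have h2 := ih (j + 1)
      have h3 := ih (j - 1)
      have key : u k j + d * Δt / Δx ^ 2 * (u k (j + 1) - 2 * u k j + u k (j - 1))
          = (1 - 2 * (d * Δt / Δx ^ 2)) * u k j
            + (d * Δt / Δx ^ 2) * u k (j + 1) + (d * Δt / Δx ^ 2) * u k (j - 1) := by
        ring
      rw [key]
      have h4 : 0 ≤ 1 - 2 * (d * Δt / Δx ^ 2) := by linarith
      have := hg (u k j)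
      have := mul_nonneg h4 h1
      have := mul_nonneg hlam h2
      have := mul_nonneg hlam h3
      nlinarith [hΔt.le]
    · have := mul_nonneg (hf (u k j)) hΔt.le
      linarith
end
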